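/- Let 0 < μ ≤ T, let (α^{(n)})_{n∈ℕ} be a sequence of (T,μ)-signals and let (ν_n)_{n∈ℕ} be an increasing sequence of positive real numbers with ν_n → +∞. Define α_n(t) = α^{(n)}(ν_n t) for t ≥ 0. If α⋆ ∈ L^∞([0,∞),[0,1]) is a weak-star limit point of the sequence (α_n), then α⋆(t) ∈ [μ/T, 1] for almost every t ≥ 0. -/

import Mathlib

open MeasureTheory Filter Matrix

noncomputable section

/-- A `(T,μ)`-signal: a measurable function with values in `[0,1]` whose integral over any
window `[t, t+T]` with `t ≥ 0` is at least `μ`. -/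
def IsPESignal (T μ : ℝ) (α : ℝ → ℝ) : Prop :=
  Measurable α ∧ (∀ t, α t ∈ Set.Icc (0:ℝ) 1) ∧
    ∀ t : ℝ, 0 ≤ t → μ ≤ ∫ s in t..(t + T), α s

lemma pe_intervalIntegrable {T μ : ℝ} {β : ℝ → ℝ} (hβ : IsPESignal T μ β) (a b : ℝ) :
    IntervalIntegrable β volume a b := by
  rw [intervalIntegrable_iff]
  refine Measure.integrableOn_of_bounded (M := 1) measure_Ioc_lt_top.ne hβ.1.aestronglyMeasurable ?_
  · refine ae_of_all _ fun t => ?_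
    have := hβ.2.1 t
    rw [Real.norm_eq_abs, abs_le]
    exact ⟨by linarith [this.1], this.2⟩

lemma pe_window {T μ : ℝ} (hμ : 0 < μ) (hμT : μ ≤ T) {β : ℝ → ℝ} (hβ : IsPESignal T μ β)
    (n : ℕ) : ∀ t : ℝ, 0 ≤ t → (n : ℝ) * μ ≤ ∫ s in t..(t + n * T), β s := by
  induction n with
  | zero => intro t ht; simp
  | succ n ih =>
    intro t ht
    have hT : 0 < T := hμ.trans_le hμT
    have h1 := hβ.2.2 t ht
    have h2 := ih (t + T) (by linarith)
    have hsplit := intervalIntegral.integral_add_adjacent_intervals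
      (pe_intervalIntegrable hβ t (t + T)) (pe_intervalIntegrable hβ (t + T) (t + T + n * T))
    have goal_eq : t + ((n + 1 : ℕ) : ℝ) * T = t + T + (n : ℝ) * T := by push_cast; ring
    rw [goal_eq, ← hsplit]
    push_cast
    linarith

lemma pe_window' {T μ : ℝ} (hμ : 0 < μ) (hμT : μ ≤ T) {β : ℝ → ℝ} (hβ : IsPESignal T μ β)
    {t L : ℝ} (ht : 0 ≤ t) (hL : 0 ≤ L) :
    μ * L / T - μ ≤ ∫ s in t..(t + L), β s := by
  have hT : 0 < T := hμ.trans_le hμT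
  set n : ℕ := ⌊L / T⌋₊ with hn
  have hn1 : (n : ℝ) * T ≤ L := by
    have := Nat.floor_le (div_nonneg hL hT.le)
    calc (n : ℝ) * T ≤ (L / T) * T := by nlinarith
    _ = L := by field_simp
  have hn2 : L / T < (n : ℝ) + 1 := Nat.lt_floor_add_one _
  have hsplit := intervalIntegral.integral_add_adjacent_intervals
    (pe_intervalIntegrable hβ t (t + n * T)) (pe_intervalIntegrable hβ (t + n * T) (t + L))
  have h1 := pe_window hμ hμT hβ n t ht
  have h2 : 0 ≤ ∫ s in (t + n * T)..(t + L), β s := by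
    apply intervalIntegral.integral_nonneg (by linarith)
    exact fun u _ => (hβ.2.1 u).1
  have hdiv : μ * L / T - μ ≤ (n : ℝ) * μ := by
    have : μ * (L / T) ≤ μ * ((n : ℝ) + 1) := by nlinarith
    have e : μ * L / T = μ * (L / T) := by ring
    nlinarith
  linarith [hsplit ▸ (by linarith : (n : ℝ) * μ + 0 ≤ (∫ s in t..(t + n * T), β s) + ∫ s in (t + n * T)..(t + L), β s)]

theorem weakStar_limit_of_rescaled_pe_signals (T μ : ℝ) (hμ : 0 < μ) (hμT : μ ≤ T)
    (α : ℕ → ℝ → ℝ) (hα : ∀ n, IsPESignal T μ (α n))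
    (ν : ℕ → ℝ) (hν0 : ∀ n, 0 < ν n) (hνmono : StrictMono ν)
    (hνtop : Tendsto ν atTop atTop)
    (αstar : ℝ → ℝ) (hmeas : Measurable αstar)
    (hbd : ∀ t : ℝ, 0 ≤ t → αstar t ∈ Set.Icc (0:ℝ) 1)
    (φ : ℕ → ℕ) (hφ : StrictMono φ)
    (hlim : ∀ g : ℝ → ℝ, IntegrableOn g (Set.Ici (0:ℝ)) →
      Tendsto (fun k => ∫ s in Set.Ici (0:ℝ), α (φ k) (ν (φ k) * s) * g s) atTop
        (nhds (∫ s in Set.Ici (0:ℝ), αstar s * g s))) :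
    ∀ᵐ t ∂(volume.restrict (Set.Ici (0:ℝ))), αstar t ∈ Set.Icc (μ / T) 1 := by
  have hT : 0 < T := hμ.trans_le hμT
  -- Step 1: the interval lower bound on αstar
  have key : ∀ a b : ℝ, 0 ≤ a → a ≤ b →
      μ / T * (b - a) ≤ ∫ s in Set.Icc a b, αstar s := by
    intro a b ha hab
    set g : ℝ → ℝ := (Set.Icc a b).indicator (fun _ => (1:ℝ)) with hg
    have hgint : IntegrableOn g (Set.Ici (0:ℝ)) := by
      rw [IntegrableOn, hg, integrable_indicator_iff measurableSet_Icc]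
      refine Measure.integrableOn_of_bounded (M := 1)
        (lt_of_le_of_lt (Measure.restrict_apply_le _ _) measure_Icc_lt_top).ne
        aestronglyMeasurable_const (ae_of_all _ fun _ => by norm_num)
    have hrw : ∀ F : ℝ → ℝ, ∫ s in Set.Ici (0:ℝ), F s * g s = ∫ s in Set.Icc a b, F s := by
      intro F
      have e : (fun s => F s * g s) = (Set.Icc a b).indicator F := by
        funext s
        by_cases h : s ∈ Set.Icc a b <;>
          simp [hg, Set.indicator_of_mem, Set.indicator_of_notMem, h]
      have hss : Set.Icc a b ∩ Set.Ici (0:ℝ) = Set.Icc a b :=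
        Set.inter_eq_left.2 (fun x hx => le_trans ha hx.1)
      rw [e, integral_indicator measurableSet_Icc, Measure.restrict_restrict measurableSet_Icc,
        hss]
    have hlim' := hlim g hgint
    rw [hrw] at hlim'
    simp only [hrw] at hlim'
    -- lower bound each term
    have hterm : ∀ k : ℕ, μ / T * (b - a) - μ / ν (φ k) ≤
        ∫ s in Set.Icc a b, α (φ k) (ν (φ k) * s) := by
      intro k
      set c := ν (φ k) with hc
      have hcpos : 0 < c := hν0 _
      have h1 : ∫ s in Set.Icc a b, α (φ k) (c * s) =
          ∫ s in a..b, α (φ k) (c * s) := by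
        rw [integral_Icc_eq_integral_Ioc, intervalIntegral.integral_of_le hab]
      rw [h1, intervalIntegral.integral_comp_mul_left _ hcpos.ne']
      have h2 : c * b = c * a + c * (b - a) := by ring
      rw [h2]
      have h3 := pe_window' hμ hμT (hα (φ k)) (t := c * a) (L := c * (b - a))
        (by positivity) (by nlinarith)
      have h4 : μ * (c * (b - a)) / T - μ ≤ ∫ s in (c * a)..(c * a + c * (b - a)), α (φ k) s :=
        h3
      rw [smul_eq_mul]
      calc μ / T * (b - a) - μ / c = c⁻¹ * (μ * (c * (b - a)) / T - μ) := by
            field_simp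
        _ ≤ c⁻¹ * ∫ s in (c * a)..(c * a + c * (b - a)), α (φ k) s := by
            apply mul_le_mul_of_nonneg_left h4 (le_of_lt (inv_pos.2 hcpos))
    have hνφ : Tendsto (fun k => ν (φ k)) atTop atTop :=
      hνtop.comp hφ.tendsto_atTop
    have hsub : Tendsto (fun k => μ / T * (b - a) - μ / ν (φ k)) atTop
        (nhds (μ / T * (b - a))) := by
      have : Tendsto (fun k => μ / ν (φ k)) atTop (nhds 0) := by
        simpa [div_eq_mul_inv] using (tendsto_inv_atTop_zero.comp hνφ).const_mul μ
      simpa using (tendsto_const_nhds.sub this)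
    have := le_of_tendsto_of_tendsto hsub hlim' (Eventually.of_forall hterm)
    simpa using this
  -- Step 2: Lebesgue differentiation
  set βs : ℝ → ℝ := (Set.Ici (0:ℝ)).indicator αstar with hβs
  have hβmeas : Measurable βs := hmeas.indicator measurableSet_Ici
  have hβbd : ∀ t, ‖βs t‖ ≤ 1 := by
    intro t
    rw [Real.norm_eq_abs, abs_le]
    by_cases h : t ∈ Set.Ici (0:ℝ)
    · rw [hβs, Set.indicator_of_mem h]
      have := hbd t h
      exact ⟨by linarith [this.1], this.2⟩
    · rw [hβs, Set.indicator_of_notMem h]; norm_num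
  have hloc : LocallyIntegrable βs volume := by
    rw [locallyIntegrable_iff]
    intro K hK
    exact Measure.integrableOn_of_bounded hK.measure_lt_top.ne
      hβmeas.aestronglyMeasurable (ae_of_all _ hβbd)
  have hdiff := IsUnifLocDoublingMeasure.ae_tendsto_average (μ := volume) hloc 1
  have main : ∀ᵐ x ∂(volume : Measure ℝ), x ∈ Set.Ioi (0:ℝ) → αstar x ∈ Set.Icc (μ / T) 1 := by
    filter_upwards [hdiff] with x hx hxpos
    refine ⟨?_, (hbd x (le_of_lt hxpos)).2⟩
    have hx' : Tendsto (fun r : ℝ => ⨍ y in Metric.closedBall x r, βs y) (nhdsWithin (0:ℝ) (Set.Ioi 0))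
        (nhds (βs x)) := by
      refine hx (fun _ => x) (fun r => r) tendsto_id ?_
      filter_upwards [self_mem_nhdsWithin] with r hr
      exact Metric.mem_closedBall_self (by simp at hr ⊢; linarith)
    have hev : ∀ᶠ r in nhdsWithin (0:ℝ) (Set.Ioi 0), μ / T ≤ ⨍ y in Metric.closedBall x r, βs y := by
      have hmem : Set.Ioo (0:ℝ) x ∈ nhdsWithin (0:ℝ) (Set.Ioi 0) := Ioo_mem_nhdsGT_of_mem ⟨le_refl 0, hxpos⟩
      filter_upwards [hmem] with r hr
      obtain ⟨hr0, hrx⟩ := hr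
      rw [setAverage_eq, Real.closedBall_eq_Icc]
      have hvol : volume.real (Set.Icc (x - r) (x + r)) = 2 * r := by
        rw [measureReal_def, Real.volume_Icc]
        rw [ENNReal.toReal_ofReal (by linarith)]
        ring
      rw [hvol]
      have heq : ∫ y in Set.Icc (x - r) (x + r), βs y = ∫ y in Set.Icc (x - r) (x + r), αstar y := by
        apply setIntegral_congr_fun measurableSet_Icc
        intro y hy
        exact Set.indicator_of_mem (by simp; linarith [hy.1]) _
      rw [heq]
      have hkey := key (x - r) (x + r) (by linarith) (by linarith)
      rw [smul_eq_mul]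
      calc μ / T = (2 * r)⁻¹ * (μ / T * ((x + r) - (x - r))) := by
            field_simp; ring
        _ ≤ (2 * r)⁻¹ * ∫ y in Set.Icc (x - r) (x + r), αstar y := by
            apply mul_le_mul_of_nonneg_left hkey (by positivity)
    have := ge_of_tendsto hx' hev
    rwa [hβs, Set.indicator_of_mem (Set.mem_Ici.mpr hxpos.le)] at this
  have h1 : ∀ᵐ t ∂(volume.restrict (Set.Ici (0:ℝ))), t ∈ Set.Ioi (0:ℝ) →
      αstar t ∈ Set.Icc (μ / T) 1 := ae_restrict_of_ae main
  have h2 : ∀ᵐ t ∂(volume.restrict (Set.Ici (0:ℝ))), t ≠ (0:ℝ) :=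
    ae_restrict_of_ae (by
      have : (volume : Measure ℝ) {(0:ℝ)} = 0 := measure_singleton 0
      exact measure_mono_null (fun x hx => by simpa using hx) this)
  have h3 : ∀ᵐ t ∂(volume.restrict (Set.Ici (0:ℝ))), t ∈ Set.Ici (0:ℝ) :=
    ae_restrict_mem measurableSet_Ici
  filter_upwards [h1, h2, h3] with t ht1 ht2 ht3
  exact ht1 (lt_of_le_of_ne ht3 (Ne.symm ht2))

end
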